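/- arXiv:2001.02323 — 3 statements merged into one kernel-verified Lean document; each statement's English description precedes it below -/
import Mathlib

section
/- Let g: [0,1] → ℝ be differentiable with g' being 2L-Lipschitz, and suppose g(a) > ε and g'(a) = 0 for some a ∈ [0,1]. Then g(b)² > ε²/9 for every b ∈ [0,1] with |a - b| ≤ sqrt(2ε/(3L)). -/
lemma key_5 (L : ℝ) (f f' : ℝ → ℝ) (c d : ℝ) (hcd : c ≤ d)
    (hderiv : ∀ x, HasDerivAt f (f' x) x)
    (hb : ∀ x ∈ Set.Icc c d, |f' x| ≤ 2 * L * (x - c)) :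
    |f d - f c| ≤ L * (d - c) ^ 2 := by
  have H := image_norm_le_of_norm_deriv_right_le_deriv_boundary
    (f := fun x => f x - f c) (f' := f') (a := c) (b := d)
    (fun x _ => ((hderiv x).sub_const (f c)).continuousAt.continuousWithinAt)
    (fun x _ => ((hderiv x).sub_const (f c)).hasDerivWithinAt)
    (B := fun x => L * (x - c) ^ 2) (B' := fun x => 2 * L * (x - c))
    (by simp)
    (fun x => by
      have : HasDerivAt (fun x => L * (x - c) ^ 2) (L * (2 * (x - c))) x := by
        have h1 : HasDerivAt (fun x : ℝ => (x - c) ^ 2) (2 * (x - c) ^ 1 * 1) x :=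
          (((hasDerivAt_id x).sub_const c).pow 2)
        simpa using h1.const_mul L
      convert this using 1; ring)
    (fun x hx => by
      simpa [Real.norm_eq_abs] using hb x ⟨hx.1, le_of_lt hx.2⟩)
  simpa [Real.norm_eq_abs] using H (Set.right_mem_Icc.2 hcd)

/-- If `g` is differentiable with a `2L`-Lipschitz derivative `g'`, `g a > ε`
and `g' a = 0`, then `g b ^ 2 > ε²/9` for every `b ∈ [0,1]` with
`|a - b| ≤ √(2ε/(3L))`. -/
theorem stmt_5 (L ε : ℝ) (hL : 0 < L) (hε : 0 < ε) (g g' : ℝ → ℝ)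
    (hderiv : ∀ x, HasDerivAt g (g' x) x)
    (hg' : ∀ x ∈ Set.Icc (0:ℝ) 1, ∀ y ∈ Set.Icc (0:ℝ) 1, |g' x - g' y| ≤ 2 * L * |x - y|)
    (a : ℝ) (ha : a ∈ Set.Icc (0:ℝ) 1) (hga : g a > ε) (hga' : g' a = 0) :
    ∀ b ∈ Set.Icc (0:ℝ) 1, |a - b| ≤ Real.sqrt (2 * ε / (3 * L)) →
      (g b) ^ 2 > ε ^ 2 / 9 := by
  intro b hb hab
  have hmain : |g b - g a| ≤ L * (a - b) ^ 2 := by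
    rcases le_or_gt a b with h | h
    · have := key_5 L g g' a b h hderiv (fun x hx => by
        have hx01 : x ∈ Set.Icc (0:ℝ) 1 := ⟨le_trans ha.1 hx.1, le_trans hx.2 hb.2⟩
        have := hg' x hx01 a ha
        rw [hga'] at this
        simpa [abs_of_nonneg (sub_nonneg.2 hx.1)] using this)
      calc |g b - g a| ≤ L * (b - a) ^ 2 := this
        _ = L * (a - b) ^ 2 := by ring
    · have := key_5 L (fun t => g (a + b - t)) (fun t => g' (a + b - t) * (-1)) b a h.le
        (fun t => (hderiv (a + b - t)).comp t (((hasDerivAt_id t).const_sub (a + b))))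
        (fun t ht => by
          have habt : a + b - t ∈ Set.Icc (0:ℝ) 1 := by
            constructor
            · linarith [hb.1, ht.2]
            · linarith [ha.2, ht.1]
          have := hg' (a + b - t) habt a ha
          rw [hga'] at this
          have : |g' (a + b - t)| ≤ 2 * L * |b - t| := by
            simpa [show a + b - t - a = b - t by ring] using this
          calc |g' (a + b - t) * (-1)| = |g' (a + b - t)| := by
                simp [abs_mul]
            _ ≤ 2 * L * |b - t| := this
            _ = 2 * L * (t - b) := by rw [abs_sub_comm, abs_of_nonneg (sub_nonneg.2 ht.1)])
      simp only [show a + b - a = b by ring, show a + b - b = a by ring] at this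
      exact this
  have hsq : (a - b) ^ 2 ≤ 2 * ε / (3 * L) := by
    have h1 : |a - b| ^ 2 ≤ Real.sqrt (2 * ε / (3 * L)) ^ 2 := by
      apply pow_le_pow_left₀ (abs_nonneg _) hab
    rwa [sq_abs, Real.sq_sqrt (by positivity)] at h1
  have h2 : L * (a - b) ^ 2 ≤ 2 * ε / 3 := by
    calc L * (a - b) ^ 2 ≤ L * (2 * ε / (3 * L)) := by nlinarith
      _ = 2 * ε / 3 := by field_simp
  have h3 : g b > ε / 3 := by
    have := abs_le.1 hmain
    linarith [this.1]
  nlinarith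
end

section
/- Let g: [0,1] → ℝ be differentiable with g' being 2L-Lipschitz, and suppose g(a) > ε with a satisfying sqrt(2ε/(3L)) < a < 1 - sqrt(2ε/(3L)). Then the Lebesgue measure of the set {b ∈ [0,1] : g(b)² > ε²/9} is at least sqrt(2ε/(3L)). -/
open MeasureTheory

/-- If `g` is differentiable with a `2L`-Lipschitz derivative and `g a > ε` for
some `a` with `√(2ε/(3L)) < a < 1 - √(2ε/(3L))`, then the Lebesgue measure of
`{b ∈ [0,1] : g b ^ 2 > ε²/9}` is at least `√(2ε/(3L))`. -/
theorem stmt_6 (L ε : ℝ) (hL : 0 < L) (hε : 0 < ε) (g g' : ℝ → ℝ)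
    (hderiv : ∀ x, HasDerivAt g (g' x) x)
    (hg' : ∀ x ∈ Set.Icc (0:ℝ) 1, ∀ y ∈ Set.Icc (0:ℝ) 1, |g' x - g' y| ≤ 2 * L * |x - y|)
    (a : ℝ) (ha1 : Real.sqrt (2 * ε / (3 * L)) < a)
    (ha2 : a < 1 - Real.sqrt (2 * ε / (3 * L))) (hga : g a > ε) :
    volume {b ∈ Set.Icc (0:ℝ) 1 | (g b) ^ 2 > ε ^ 2 / 9}
      ≥ ENNReal.ofReal (Real.sqrt (2 * ε / (3 * L))) := by
  set r := Real.sqrt (2 * ε / (3 * L)) with hrdef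
  have hr0 : 0 < r := Real.sqrt_pos.2 (by positivity)
  have hr2 : r ^ 2 = 2 * ε / (3 * L) := Real.sq_sqrt (by positivity)
  have hLr2 : L * r ^ 2 = 2 * ε / 3 := by
    rw [hr2]; field_simp
  set φ : ℝ → ℝ := fun x => g x + L * (x - a) ^ 2 with hφdef
  have hφd : ∀ x, HasDerivAt φ (g' x + 2 * L * (x - a)) x := by
    intro x
    have h1 : HasDerivAt (fun x : ℝ => L * (x - a) ^ 2) (2 * L * (x - a)) x := by
      have := (((hasDerivAt_id x).sub_const a).pow 2).const_mul L
      exact this.congr_deriv (by simp; ring)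
    exact (hderiv x).add h1
  have hφdiff : Differentiable ℝ φ := fun x => (hφd x).differentiableAt
  -- produce an interval of length r inside [0,1] where g > ε/3
  obtain ⟨lo, hi, hlohi, hsub01, hkey⟩ :
      ∃ lo hi : ℝ, hi - lo = r ∧ Set.Icc lo hi ⊆ Set.Icc (0:ℝ) 1 ∧
        ∀ b ∈ Set.Icc lo hi, ε / 3 < g b := by
    rcases le_or_gt 0 (g' a) with hga' | hga'
    · refine ⟨a, a + r, by ring, ?_, ?_⟩
      · intro b hb
        exact ⟨by linarith [hb.1], by linarith [hb.2]⟩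
      · intro b hb
        have hmono : MonotoneOn φ (Set.Icc a (a + r)) := by
          apply monotoneOn_of_deriv_nonneg (convex_Icc _ _)
            hφdiff.continuous.continuousOn hφdiff.differentiableOn
          intro x hx
          rw [interior_Icc] at hx
          rw [(hφd x).deriv]
          have hx01 : x ∈ Set.Icc (0:ℝ) 1 := ⟨by linarith [hx.1], by linarith [hx.2]⟩
          have ha01 : a ∈ Set.Icc (0:ℝ) 1 := ⟨by linarith, by linarith⟩
          have h := (abs_le.1 (hg' x hx01 a ha01)).1
          rw [abs_of_pos (by linarith [hx.1] : (0:ℝ) < x - a)] at h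
          linarith
        have h := hmono (Set.left_mem_Icc.2 (by linarith)) hb hb.1
        have hb2 : L * (b - a) ^ 2 ≤ L * r ^ 2 := by
          apply mul_le_mul_of_nonneg_left _ hL.le
          have h1 : 0 ≤ b - a := by linarith [hb.1]
          have h2 : b - a ≤ r := by linarith [hb.2]
          nlinarith
        simp only [hφdef, sub_self] at h
        nlinarith
    · refine ⟨a - r, a, by ring, ?_, ?_⟩
      · intro b hb
        exact ⟨by linarith [hb.1], by linarith [hb.2]⟩
      · intro b hb
        have hanti : AntitoneOn φ (Set.Icc (a - r) a) := by
          apply antitoneOn_of_deriv_nonpos (convex_Icc _ _)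
            hφdiff.continuous.continuousOn hφdiff.differentiableOn
          intro x hx
          rw [interior_Icc] at hx
          rw [(hφd x).deriv]
          have hx01 : x ∈ Set.Icc (0:ℝ) 1 := ⟨by linarith [hx.1], by linarith [hx.2]⟩
          have ha01 : a ∈ Set.Icc (0:ℝ) 1 := ⟨by linarith, by linarith⟩
          have h := (abs_le.1 (hg' x hx01 a ha01)).2
          rw [abs_of_neg (by linarith [hx.2] : x - a < 0)] at h
          linarith
        have h := hanti hb (Set.right_mem_Icc.2 (by linarith)) hb.2
        have hb2 : L * (b - a) ^ 2 ≤ L * r ^ 2 := by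
          apply mul_le_mul_of_nonneg_left _ hL.le
          have h1 : b - a ≤ 0 := by linarith [hb.2]
          have h2 : -(b - a) ≤ r := by linarith [hb.1]
          nlinarith
        simp only [hφdef, sub_self] at h
        nlinarith
  have hsubset : Set.Icc lo hi ⊆ {b ∈ Set.Icc (0:ℝ) 1 | (g b) ^ 2 > ε ^ 2 / 9} := by
    intro b hb
    refine ⟨hsub01 hb, ?_⟩
    have h := hkey b hb
    nlinarith
  calc ENNReal.ofReal r = volume (Set.Icc lo hi) := by
        rw [Real.volume_Icc, hlohi]
    _ ≤ volume {b ∈ Set.Icc (0:ℝ) 1 | (g b) ^ 2 > ε ^ 2 / 9} := measure_mono hsubset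
end

section
/- Let Z_i = -(f(A_i) - f₀(A_i))² + 2(f(A_i) - f₀(A_i))η_i where η_i is, conditionally on the past and A_i, mean-zero and (σ², b)-sub-exponential, and f, f₀ take values in [0, C]. Then the conditional cumulant generating function of Z_i - E[Z_i | past] satisfies ψ_i(λ) ≤ 2λ²(f(A_i) - f₀(A_i))²σ² for all |λ| ≤ 1/(2Cb). -/
open MeasureTheory

/-- Cumulant generating function bound: if `η` is mean-zero and
`(σ², b)`-sub-exponential (conditionally on the past, here represented by the
given probability measure), `Δ = f(A_i) - f₀(A_i)` satisfies `|Δ| ≤ C`, and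
`Z = -Δ² + 2Δη` with conditional mean `μ_Z = -Δ²`, then
`ψ(λ) = log E[exp(λ(Z - μ_Z))] ≤ 2λ²Δ²σ²` for all `|λ| ≤ 1/(2Cb)`. -/
theorem stmt_15 {Ω : Type*} [MeasurableSpace Ω] (μ : Measure Ω)
    [IsProbabilityMeasure μ] (C σ2 b : ℝ) (hC : 0 < C) (hσ : 0 < σ2)
    (hb : 0 < b) (η : Ω → ℝ) (hmeas : Measurable η)
    (hmean : ∫ ω, η ω ∂μ = 0)
    (hsubexp : ∀ l : ℝ, |l| ≤ 1 / b →
      ∫ ω, Real.exp (l * η ω) ∂μ ≤ Real.exp (l ^ 2 * σ2 / 2))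
    (Δ : ℝ) (hΔ : |Δ| ≤ C)
    (Z : Ω → ℝ) (hZ : ∀ ω, Z ω = -Δ ^ 2 + 2 * Δ * η ω) :
    ∀ l : ℝ, |l| ≤ 1 / (2 * C * b) →
      Real.log (∫ ω, Real.exp (l * (Z ω - (-Δ ^ 2))) ∂μ)
        ≤ 2 * l ^ 2 * Δ ^ 2 * σ2 := by
  intro l hl
  have hrw : ∀ ω, l * (Z ω - (-Δ ^ 2)) = (2 * l * Δ) * η ω := by
    intro ω; rw [hZ ω]; ring
  have hlab : |2 * l * Δ| ≤ 1 / b := by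
    have h1 : |2 * l * Δ| = 2 * |l| * |Δ| := by
      rw [abs_mul, abs_mul]; simp [abs_of_nonneg]
    rw [h1]
    have hl' : |l| ≤ 1 / (2 * C * b) := hl
    calc 2 * |l| * |Δ| ≤ 2 * (1 / (2 * C * b)) * C := by
          have h2 : 0 ≤ (2:ℝ) * (1 / (2 * C * b)) := by positivity
          exact mul_le_mul (mul_le_mul_of_nonneg_left hl' (by norm_num)) hΔ (abs_nonneg _) h2
      _ = 1 / b := by field_simp
  have hkey := hsubexp (2 * l * Δ) hlab
  have hexp_eq : (∫ ω, Real.exp (l * (Z ω - (-Δ ^ 2))) ∂μ)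
      = ∫ ω, Real.exp ((2 * l * Δ) * η ω) ∂μ := by
    congr 1; ext ω; rw [hrw ω]
  rw [hexp_eq]
  have hrhs : (2 * l * Δ) ^ 2 * σ2 / 2 = 2 * l ^ 2 * Δ ^ 2 * σ2 := by ring
  have hrhs_nonneg : 0 ≤ 2 * l ^ 2 * Δ ^ 2 * σ2 := by positivity
  by_cases hint : Integrable (fun ω => Real.exp ((2 * l * Δ) * η ω)) μ
  · have hpos : 0 < ∫ ω, Real.exp ((2 * l * Δ) * η ω) ∂μ :=
      integral_exp_pos hint
    calc Real.log (∫ ω, Real.exp ((2 * l * Δ) * η ω) ∂μ)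
        ≤ Real.log (Real.exp ((2 * l * Δ) ^ 2 * σ2 / 2)) :=
          Real.log_le_log hpos hkey
      _ = (2 * l * Δ) ^ 2 * σ2 / 2 := Real.log_exp _
      _ = 2 * l ^ 2 * Δ ^ 2 * σ2 := hrhs
  · rw [integral_undef hint, Real.log_zero]; exact hrhs_nonneg
end
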